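/- arXiv:1302.5307 — 2 statements merged into one kernel-verified Lean document; each statement's English description precedes it below -/
import Mathlib

section
/- Let D = {(z₁,z₂) ∈ ℂ² : 0 < |z₂| < |z₁| < 1} be the Hartogs triangle. Let a > 0 be a fixed constant and let z^j = (z₁^j, z₂^j) be a sequence of points in D satisfying |z₁^j| ≤ (1 + 1/j)|z₂^j| and |z₂^j| > a for all j. Then s_D(z^j) ≥ (√2/2)·a for all j. -/
open Metric Set Filter Topology

noncomputable section

/-- The squeezing function of a domain `D` in complex Euclidean space: at `z ∈ D` it is the
supremum of radii `r > 0` such that some injective holomorphic map `f : D → Bⁿ` with `f z = 0`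
satisfies `ball 0 r ⊆ f(D)`. -/
def squeezingFn {ι : Type*} [Fintype ι] (D : Set (EuclideanSpace ℂ ι))
    (z : EuclideanSpace ℂ ι) : ℝ :=
  sSup { r : ℝ | 0 < r ∧ ∃ f : EuclideanSpace ℂ ι → EuclideanSpace ℂ ι,
    DifferentiableOn ℂ f D ∧ InjOn f D ∧ MapsTo f D (ball 0 1) ∧ f z = 0 ∧
    ball (0 : EuclideanSpace ℂ ι) r ⊆ f '' D }

/-- The Hartogs triangle `D = {(z₁, z₂) ∈ ℂ² : 0 < |z₂| < |z₁| < 1}`. -/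
def hartogsTriangle : Set (EuclideanSpace ℂ (Fin 2)) :=
  { z | 0 < ‖z 1‖ ∧ ‖z 1‖ < ‖z 0‖ ∧
        ‖z 0‖ < 1 }

noncomputable def bla (c w : ℂ) : ℂ := (w - c) / (1 - (starRingEnd ℂ) c * w)

lemma key (c w : ℂ) : Complex.normSq (1 - (starRingEnd ℂ) c * w) - Complex.normSq (w - c)
    = (1 - Complex.normSq c) * (1 - Complex.normSq w) := by
  simp only [Complex.normSq_apply, Complex.sub_re, Complex.sub_im, Complex.mul_re,
    Complex.mul_im, Complex.one_re, Complex.one_im, Complex.conj_re, Complex.conj_im]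
  ring

lemma denom_ne {c w : ℂ} (hc : ‖c‖ < 1) (hw : ‖w‖ < 1) :
    1 - (starRingEnd ℂ) c * w ≠ 0 := by
  intro h
  have h1 : (starRingEnd ℂ) c * w = 1 := by linear_combination -h
  have := congrArg (‖·‖) h1
  simp [map_mul] at this
  nlinarith [norm_nonneg c, norm_nonneg w]

lemma bla_abs_lt {c w : ℂ} (hc : ‖c‖ < 1) (hw : ‖w‖ < 1) :
    ‖bla c w‖ < 1 := by
  have hd := denom_ne hc hw
  have hpos : 0 < Complex.normSq (1 - (starRingEnd ℂ) c * w) := by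
    simpa [Complex.normSq_pos] using hd
  have hkey := key c w
  have hc2 : Complex.normSq c < 1 := by
    simpa [Complex.sq_norm] using (by nlinarith [norm_nonneg c] :
      ‖c‖ ^ 2 < 1)
  have hw2 : Complex.normSq w < 1 := by
    simpa [Complex.sq_norm] using (by nlinarith [norm_nonneg w] :
      ‖w‖ ^ 2 < 1)
  have hlt : Complex.normSq (w - c) < Complex.normSq (1 - (starRingEnd ℂ) c * w) := by
    nlinarith
  have hdpos : (0:ℝ) < ‖1 - (starRingEnd ℂ) c * w‖ := by
    simpa [Complex.norm_def, Real.sqrt_pos] using hpos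
  rw [bla, norm_div, div_lt_one hdpos]
  have := Real.sqrt_lt_sqrt (Complex.normSq_nonneg _) hlt
  simpa [Complex.norm_def] using this

lemma bla_self (c : ℂ) : bla c c = 0 := by simp [bla]

lemma bla_eq_zero_iff {c w : ℂ} (hc : ‖c‖ < 1) (hw : ‖w‖ < 1) :
    bla c w = 0 ↔ w = c := by
  rw [bla, div_eq_zero_iff, sub_eq_zero]
  simp [denom_ne hc hw]

lemma bla_bla {c w : ℂ} (hc : ‖c‖ < 1) (hw : ‖w‖ < 1) :
    bla (-c) (bla c w) = w := by
  have h1 := denom_ne hc hw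
  have hcc : 1 - (starRingEnd ℂ) c * c ≠ 0 := denom_ne hc hc
  have h1' : 1 - w * (starRingEnd ℂ) c ≠ 0 := by rwa [mul_comm]
  have h2 : 1 - (starRingEnd ℂ) (-c) * (bla c w)
      = (1 - (starRingEnd ℂ) c * c) / (1 - (starRingEnd ℂ) c * w) := by
    rw [bla]; field_simp; simp only [map_neg]; ring
  have h3 : bla c w - (-c) = w * (1 - (starRingEnd ℂ) c * c) / (1 - (starRingEnd ℂ) c * w) := by
    rw [bla]; field_simp; ring
  rw [bla, h2, h3]
  rw [div_div_div_eq]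
  field_simp

lemma bla_bla' {c v : ℂ} (hc : ‖c‖ < 1) (hv : ‖v‖ < 1) :
    bla c (bla (-c) v) = v := by
  have := bla_bla (c := -c) (w := v) (by simpa using hc) hv
  simpa using this

lemma euclidean_coord_le {x : EuclideanSpace ℂ (Fin 2)} (i : Fin 2) :
    ‖x i‖ ≤ ‖x‖ := by
  rw [EuclideanSpace.norm_eq]
  rw [show ‖x i‖ = ‖x i‖ from rfl]
  rw [Real.le_sqrt (norm_nonneg _) (by positivity)]
  exact Finset.single_le_sum (f := fun j => ‖x j‖ ^ 2)
    (fun j _ => by positivity) (Finset.mem_univ i)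


/-- Key construction: lower bound for the squeezing function at a single point. -/
lemma squeezing_lower {z : EuclideanSpace ℂ (Fin 2)} {a : ℝ} (ha : 0 < a)
    (hz : z ∈ hartogsTriangle) (h1a : a < ‖z 1‖) :
    Real.sqrt 2 / 2 * a ≤ squeezingFn hartogsTriangle z := by
  -- basic facts about z
  obtain ⟨h1, h2, h3⟩ := hz
  have hz0 : z 0 ≠ 0 := by
    intro h; rw [h] at h2; simp at h2; linarith
  set c : ℂ := z 0 with hc
  set d : ℂ := z 1 / z 0 with hd
  have hc1 : ‖c‖ < 1 := h3
  have hac : a < ‖c‖ := lt_trans h1a h2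
  have hz0pos : 0 < ‖z 0‖ := lt_trans h1 h2
  have hd1 : ‖d‖ < 1 := by
    rw [hd, norm_div, div_lt_one hz0pos]; exact h2
  have had : a < ‖d‖ := by
    rw [hd, norm_div, lt_div_iff₀ hz0pos]
    nlinarith
  have ha1 : a < 1 := lt_trans hac hc1
  have hs2 : (0:ℝ) < Real.sqrt 2 := by positivity
  have hs2c : ((Real.sqrt 2 : ℝ) : ℂ) ≠ 0 := by
    exact_mod_cast Complex.ofReal_ne_zero.mpr (ne_of_gt hs2)
  -- the map f
  set f : EuclideanSpace ℂ (Fin 2) → EuclideanSpace ℂ (Fin 2) := fun w =>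
    (WithLp.equiv 2 (Fin 2 → ℂ)).symm
      ![bla c (w 0) / (Real.sqrt 2 : ℂ), bla d (w 1 / w 0) / (Real.sqrt 2 : ℂ)] with hf
  have hf0 : ∀ w, f w 0 = bla c (w 0) / (Real.sqrt 2 : ℂ) := fun w => rfl
  have hf1 : ∀ w, f w 1 = bla d (w 1 / w 0) / (Real.sqrt 2 : ℂ) := fun w => rfl
  -- facts about points of the Hartogs triangle
  have hD : ∀ w : EuclideanSpace ℂ (Fin 2), w ∈ hartogsTriangle →
      ‖w 0‖ < 1 ∧ w 0 ≠ 0 ∧ ‖w 1 / w 0‖ < 1 := by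
    rintro w ⟨g1, g2, g3⟩
    have hw0 : 0 < ‖w 0‖ := lt_trans g1 g2
    refine ⟨g3, by simpa using ne_of_gt hw0, ?_⟩
    rw [norm_div, div_lt_one hw0]; exact g2
  -- injectivity helper: recover coordinates
  have hrec : ∀ w : EuclideanSpace ℂ (Fin 2), w ∈ hartogsTriangle →
      bla (-c) ((Real.sqrt 2 : ℂ) * f w 0) = w 0 ∧
      bla (-d) ((Real.sqrt 2 : ℂ) * f w 1) = w 1 / w 0 := by
    intro w hw
    obtain ⟨e1, e2, e3⟩ := hD w hw
    constructor
    · rw [hf0, mul_div_cancel₀ _ hs2c]; exact bla_bla hc1 e1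
    · rw [hf1, mul_div_cancel₀ _ hs2c]; exact bla_bla hd1 e3
  -- differentiability
  have hdiff : DifferentiableOn ℂ f hartogsTriangle := by
    rw [differentiableOn_euclidean]
    have hev : ∀ i : Fin 2, Differentiable ℂ (fun x : EuclideanSpace ℂ (Fin 2) => x i) :=
      differentiable_euclidean.mp differentiable_id
    intro i
    fin_cases i
    · show DifferentiableOn ℂ
        (fun x : EuclideanSpace ℂ (Fin 2) => bla c (x 0) / ((Real.sqrt 2 : ℝ) : ℂ))
        hartogsTriangle
      simp only [bla, div_eq_mul_inv]
      refine DifferentiableOn.mul (DifferentiableOn.mul ?_ ?_) (differentiableOn_const _)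
      · exact ((hev 0).sub_const c).differentiableOn
      · refine DifferentiableOn.inv ?_ ?_
        · exact (((hev 0).const_mul _).const_sub 1).differentiableOn
        · intro w hw; exact denom_ne hc1 (hD w hw).1
    · show DifferentiableOn ℂ
        (fun x : EuclideanSpace ℂ (Fin 2) => bla d (x 1 / x 0) / ((Real.sqrt 2 : ℝ) : ℂ))
        hartogsTriangle
      have hq : DifferentiableOn ℂ (fun x : EuclideanSpace ℂ (Fin 2) => x 1 / x 0)
          hartogsTriangle := by
        simp only [div_eq_mul_inv]
        refine DifferentiableOn.mul (hev 1).differentiableOn ?_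
        exact DifferentiableOn.inv (hev 0).differentiableOn (fun w hw => (hD w hw).2.1)
      simp only [bla, div_eq_mul_inv]
      refine DifferentiableOn.mul (DifferentiableOn.mul ?_ ?_) (differentiableOn_const _)
      · exact hq.sub_const d
      · refine DifferentiableOn.inv ?_ ?_
        · exact (differentiableOn_const _).sub ((differentiableOn_const _).mul hq)
        · intro w hw; exact denom_ne hd1 (hD w hw).2.2
  -- injectivity
  have hinj : InjOn f hartogsTriangle := by
    intro w hw w' hw' heq
    have e0 : f w 0 = f w' 0 := congrArg (fun v : EuclideanSpace ℂ (Fin 2) => v 0) heq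
    have e1 : f w 1 = f w' 1 := congrArg (fun v : EuclideanSpace ℂ (Fin 2) => v 1) heq
    have k0 : w 0 = w' 0 := by
      rw [← (hrec w hw).1, ← (hrec w' hw').1, e0]
    have k1' : w 1 / w 0 = w' 1 / w' 0 := by
      rw [← (hrec w hw).2, ← (hrec w' hw').2, e1]
    have k1 : w 1 = w' 1 := by
      have hA := (hD w hw).2.1
      have hB := (hD w' hw').2.1
      rw [k0, div_eq_div_iff hB hB] at k1'
      exact mul_right_cancel₀ hB k1'
    ext i
    fin_cases i
    · exact k0
    · exact k1
  -- maps to ball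
  have hmaps : MapsTo f hartogsTriangle (ball 0 1) := by
    intro w hw
    obtain ⟨e1, e2, e3⟩ := hD w hw
    rw [mem_ball_zero_iff, EuclideanSpace.norm_eq, Fin.sum_univ_two]
    have b0 : ‖bla c (w 0)‖ < 1 := bla_abs_lt hc1 e1
    have b1 : ‖bla d (w 1 / w 0)‖ < 1 := bla_abs_lt hd1 e3
    have n0 : ‖f w 0‖ = ‖bla c (w 0)‖ / Real.sqrt 2 := by
      rw [hf0]; simp [norm_div, Complex.norm_real, abs_of_nonneg (le_of_lt hs2)]
    have n1 : ‖f w 1‖ = ‖bla d (w 1 / w 0)‖ / Real.sqrt 2 := by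
      rw [hf1]; simp [norm_div, Complex.norm_real, abs_of_nonneg (le_of_lt hs2)]
    rw [n0, n1, Real.sqrt_lt' one_pos]
    have hsq : Real.sqrt 2 ^ 2 = 2 := Real.sq_sqrt (by norm_num)
    have hb0 : ‖bla c (w 0)‖ ≥ 0 := norm_nonneg _
    have hb1 : ‖bla d (w 1 / w 0)‖ ≥ 0 := norm_nonneg _
    rw [div_pow, div_pow, hsq]
    nlinarith
  -- f z = 0
  have hfz : f z = 0 := by
    ext i
    fin_cases i
    · show f z 0 = 0
      rw [hf0, ← hc, bla_self]; simp
    · show f z 1 = 0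
      rw [hf1, ← hd, bla_self]; simp
  -- the image contains the ball
  have himg : ball (0 : EuclideanSpace ℂ (Fin 2)) (Real.sqrt 2 / 2 * a) ⊆
      f '' hartogsTriangle := by
    intro v hv
    rw [mem_ball_zero_iff] at hv
    have hv0 : ‖(Real.sqrt 2 : ℂ) * v 0‖ < a := by
      rw [norm_mul]
      have := euclidean_coord_le (x := v) 0
      have habs : ‖((Real.sqrt 2 : ℝ) : ℂ)‖ = Real.sqrt 2 := by
        simp [Complex.norm_real, abs_of_nonneg (le_of_lt hs2)]
      rw [habs]
      nlinarith [Real.sq_sqrt (by norm_num : (2:ℝ) ≥ 0)]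
    have hv1 : ‖(Real.sqrt 2 : ℂ) * v 1‖ < a := by
      rw [norm_mul]
      have := euclidean_coord_le (x := v) 1
      have habs : ‖((Real.sqrt 2 : ℝ) : ℂ)‖ = Real.sqrt 2 := by
        simp [Complex.norm_real, abs_of_nonneg (le_of_lt hs2)]
      rw [habs]
      nlinarith [Real.sq_sqrt (by norm_num : (2:ℝ) ≥ 0)]
    set u0 : ℂ := (Real.sqrt 2 : ℂ) * v 0 with hu0
    set u1 : ℂ := (Real.sqrt 2 : ℂ) * v 1 with hu1
    have hu0lt : ‖u0‖ < 1 := lt_trans hv0 ha1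
    have hu1lt : ‖u1‖ < 1 := lt_trans hv1 ha1
    set w0 : ℂ := bla (-c) u0 with hw0def
    set β : ℂ := bla (-d) u1 with hβdef
    have hnc : ‖-c‖ < 1 := by simpa using hc1
    have hnd : ‖-d‖ < 1 := by simpa using hd1
    have hw0lt : ‖w0‖ < 1 := bla_abs_lt hnc hu0lt
    have hβlt : ‖β‖ < 1 := bla_abs_lt hnd hu1lt
    have hw0ne : w0 ≠ 0 := by
      rw [hw0def]
      intro h
      rw [bla_eq_zero_iff hnc hu0lt] at h
      rw [h] at hv0
      simp only [← hu0, norm_neg] at hv0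
      exact absurd hac (not_lt.mpr (le_of_lt hv0))
    have hβne : β ≠ 0 := by
      rw [hβdef]
      intro h
      rw [bla_eq_zero_iff hnd hu1lt] at h
      rw [h] at hv1
      simp only [← hu1, norm_neg] at hv1
      exact absurd had (not_lt.mpr (le_of_lt hv1))
    set w : EuclideanSpace ℂ (Fin 2) :=
      (WithLp.equiv 2 (Fin 2 → ℂ)).symm ![w0, w0 * β] with hwdef
    have hwa0 : w 0 = w0 := rfl
    have hwa1 : w 1 = w0 * β := rfl
    have hwmem : w ∈ hartogsTriangle := by
      refine ⟨?_, ?_, ?_⟩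
      · rw [hwa1, norm_mul]
        exact mul_pos (norm_pos_iff.mpr hw0ne) (norm_pos_iff.mpr hβne)
      · rw [hwa0, hwa1, norm_mul]
        have h0pos : 0 < ‖w0‖ := norm_pos_iff.mpr hw0ne
        nlinarith [norm_nonneg β]
      · rw [hwa0]; exact hw0lt
    refine ⟨w, hwmem, ?_⟩
    ext i
    fin_cases i
    · show f w 0 = v 0
      rw [hf0, hwa0, hw0def, bla_bla' hc1 hu0lt, hu0, mul_comm, mul_div_assoc,
        div_self hs2c, mul_one]
    · show f w 1 = v 1
      have hq1 : w 1 / w 0 = β := by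
        rw [hwa0, hwa1, mul_comm, mul_div_assoc, div_self hw0ne, mul_one]
      rw [hf1, hq1, hβdef, bla_bla' hd1 hu1lt, hu1, mul_comm, mul_div_assoc,
        div_self hs2c, mul_one]
  -- conclude
  have hmem : Real.sqrt 2 / 2 * a ∈ { r : ℝ | 0 < r ∧
      ∃ f : EuclideanSpace ℂ (Fin 2) → EuclideanSpace ℂ (Fin 2),
      DifferentiableOn ℂ f hartogsTriangle ∧ InjOn f hartogsTriangle ∧
      MapsTo f hartogsTriangle (ball 0 1) ∧ f z = 0 ∧
      ball (0 : EuclideanSpace ℂ (Fin 2)) (Real.sqrt 2 / 2 * a) ⊆ f '' hartogsTriangle } := by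
    exact ⟨by positivity, f, hdiff, hinj, hmaps, hfz, himg⟩
  have hbdd : BddAbove { r : ℝ | 0 < r ∧
      ∃ f : EuclideanSpace ℂ (Fin 2) → EuclideanSpace ℂ (Fin 2),
      DifferentiableOn ℂ f hartogsTriangle ∧ InjOn f hartogsTriangle ∧
      MapsTo f hartogsTriangle (ball 0 1) ∧ f z = 0 ∧
      ball (0 : EuclideanSpace ℂ (Fin 2)) r ⊆ f '' hartogsTriangle } := by
    refine ⟨1, ?_⟩
    rintro x ⟨hx, g, -, -, hmap, -, hball⟩
    by_contra hx1
    push_neg at hx1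
    have hy : (EuclideanSpace.single (0 : Fin 2) (1:ℂ)) ∈
        ball (0 : EuclideanSpace ℂ (Fin 2)) x := by
      rw [mem_ball_zero_iff, EuclideanSpace.norm_single]
      simpa using hx1
    obtain ⟨w, hw, hfw⟩ := hball hy
    have := hmap hw
    rw [hfw, mem_ball_zero_iff, EuclideanSpace.norm_single] at this
    simp at this
  rw [squeezingFn]
  exact le_csSup hbdd hmem


/-- Let `D` be the Hartogs triangle. If `z^j ∈ D` is a sequence with
`|z₁^j| ≤ (1 + 1/j)|z₂^j|` and `|z₂^j| > a > 0` for all `j`, then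
`s_D(z^j) ≥ (√2/2)·a` for all `j`. -/
theorem squeezingFn_hartogsTriangle_lower_bound
    (a : ℝ) (ha : 0 < a) (zseq : ℕ → EuclideanSpace ℂ (Fin 2))
    (hmem : ∀ j, zseq j ∈ hartogsTriangle)
    (hratio : ∀ j : ℕ, 1 ≤ j →
      ‖zseq j 0‖ ≤ (1 + 1 / (j : ℝ)) * ‖zseq j 1‖)
    (hlow : ∀ j, a < ‖zseq j 1‖) :
    ∀ j, Real.sqrt 2 / 2 * a ≤ squeezingFn hartogsTriangle (zseq j) := by
  exact fun j => squeezing_lower ha (hmem j) (hlow j)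
end
end

section
/- Let Ω = D_I(r,s) be the classical bounded symmetric domain of type I (r ≤ s), let m be a positive integer and k > 0, and let Ω̂_k = {(Z,W) ∈ Ω × ℂᵐ : ‖W‖² < N(Z,Z)^k} with N(Z,Z) = det(I − Z·conj(Z)ᵗ). Then the boundary point (0, …, 0, 1) (i.e., Z = 0 and W = (0,…,0,1) ∈ ℂᵐ) is a globally strongly convex boundary point of Ω̂_k; in particular, the real Hessian at this point of the defining function X(Z,W) = ‖W‖²/N(Z,Z)^k − 1 equals the block-diagonal matrix diag(2k·I_{2rs}, 2·I_{2m}), the gradient ∇X at this point is 2∂/∂u_m ≠ 0 where u_m = Re(w_m), and the closure of Ω̂_k meets the real hyperplane {Re(w_m) = 1} only in the point (0,…,0,1). -/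
open Metric Set Filter Topology Matrix
open scoped ComplexOrder

noncomputable section

/-- The matrix part `Z` of a point `P = (Z, W) ∈ ℂ^{rs} × ℂᵐ`. -/
def matPart {r s m : ℕ} (P : EuclideanSpace ℂ ((Fin r × Fin s) ⊕ Fin m)) :
    Matrix (Fin r) (Fin s) ℂ :=
  Matrix.of fun i j => P (Sum.inl (i, j))

/-- The Cartan–Hartogs domain `Ω̂_k = {(Z, W) ∈ D_I(r,s) × ℂᵐ : ‖W‖² < N(Z,Z)^k}` over the
type I classical bounded symmetric domain `D_I(r,s) = {Z : I - Z·conj(Z)ᵗ > 0}`, with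
generic norm `N(Z,Z) = det(I - Z·conj(Z)ᵗ)`. -/
def CartanHartogsI (r s m : ℕ) (k : ℝ) :
    Set (EuclideanSpace ℂ ((Fin r × Fin s) ⊕ Fin m)) :=
  { P | (1 - matPart P * (matPart P)ᴴ).PosDef ∧
        (∑ i : Fin m, ‖P (Sum.inr i)‖ ^ 2) <
          ((1 - matPart P * (matPart P)ᴴ).det.re) ^ k }

/-- The defining function `X(Z, W) = ‖W‖² / N(Z,Z)^k - 1` of the Cartan–Hartogs domain. -/
def cartanHartogsDefining (r s m : ℕ) (k : ℝ)
    (P : EuclideanSpace ℂ ((Fin r × Fin s) ⊕ Fin m)) : ℝ :=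
  (∑ i : Fin m, ‖P (Sum.inr i)‖ ^ 2) /
    ((1 - matPart P * (matPart P)ᴴ).det.re) ^ k - 1

/-- `p` is a globally strongly convex (g.s.c.) boundary point of `D`: the boundary is
`C²`-smooth near `p` with nonvanishing gradient, the real Hessian of a local defining
function is positive definite on the real tangent space at `p`, and the closure of `D`
meets the real tangent hyperplane at `p` only in `p`. -/
def IsGSCBoundaryPoint {ι : Type*} [Fintype ι] (D : Set (EuclideanSpace ℂ ι))
    (p : EuclideanSpace ℂ ι) : Prop :=
  p ∈ frontier D ∧
  ∃ (U : Set (EuclideanSpace ℂ ι)) (ρ : EuclideanSpace ℂ ι → ℝ),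
    IsOpen U ∧ p ∈ U ∧ ContDiffOn ℝ 2 ρ U ∧
    (∀ z ∈ U, z ∈ D ↔ ρ z < 0) ∧
    fderiv ℝ ρ p ≠ 0 ∧
    (∀ v : EuclideanSpace ℂ ι, v ≠ 0 → fderiv ℝ ρ p v = 0 →
      0 < iteratedFDeriv ℝ 2 ρ p ![v, v]) ∧
    closure D ∩ {z | fderiv ℝ ρ p (z - p) = 0} = {p}

/-! ### Auxiliary lemmas: directional derivatives -/

section LineDeriv
variable {E : Type*} [NormedAddCommGroup E] [NormedSpace ℝ E]

lemma hasDerivAt_line (f : E → ℝ) (p v : E) (t : ℝ)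
    (hf : DifferentiableAt ℝ f (p + t • v)) :
    HasDerivAt (fun τ : ℝ => f (p + τ • v)) (fderiv ℝ f (p + t • v) v) t := by
  have hl : HasDerivAt (fun τ : ℝ => p + τ • v) v t := by
    simpa using ((hasDerivAt_id t).smul_const v).const_add p
  simpa [Function.comp_def] using hf.hasFDerivAt.comp_hasDerivAt t hl

lemma fderiv_eq_lineDeriv (f : E → ℝ) (p v : E) (hf : DifferentiableAt ℝ f p) :
    fderiv ℝ f p v = deriv (fun t : ℝ => f (p + t • v)) 0 := by
  have h := hasDerivAt_line f p v 0 (by simpa using hf)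
  simp only [zero_smul, add_zero] at h
  exact (h.deriv).symm

lemma iteratedFDeriv_two_eq_line (f : E → ℝ) (p : E) (hf : ContDiffAt ℝ 2 f p) (v : E) :
    iteratedFDeriv ℝ 2 f p ![v, v] = deriv (deriv (fun t : ℝ => f (p + t • v))) 0 := by
  have hd1 : ∀ᶠ x in 𝓝 p, DifferentiableAt ℝ f x := by
    filter_upwards [hf.eventually (by norm_num)] with x hx
    exact hx.differentiableAt two_ne_zero
  have hline : ∀ᶠ t in 𝓝 (0 : ℝ), DifferentiableAt ℝ f (p + t • v) := by
    have hc : Continuous fun t : ℝ => p + t • v := by continuity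
    have ht : Tendsto (fun t : ℝ => p + t • v) (𝓝 0) (𝓝 p) := by
      simpa using hc.tendsto 0
    exact ht.eventually hd1
  have h1 : deriv (fun t : ℝ => f (p + t • v)) =ᶠ[𝓝 (0 : ℝ)]
      fun t => fderiv ℝ f (p + t • v) v := by
    filter_upwards [hline] with t ht
    exact (hasDerivAt_line f p v t ht).deriv
  rw [Filter.EventuallyEq.deriv_eq h1]
  have hF : DifferentiableAt ℝ (fderiv ℝ f) p :=
    (hf.fderiv_right (m := 1) (by norm_num)).differentiableAt one_ne_zero
  have happ : DifferentiableAt ℝ (fun x => fderiv ℝ f x v) p :=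
    ((ContinuousLinearMap.apply ℝ ℝ v).differentiableAt).comp p hF
  rw [← fderiv_eq_lineDeriv _ p v happ]
  have hcomp : fderiv ℝ (fun x => fderiv ℝ f x v) p =
      (ContinuousLinearMap.apply ℝ ℝ v).comp (fderiv ℝ (fderiv ℝ f) p) :=
    ((ContinuousLinearMap.apply ℝ ℝ v).hasFDerivAt.comp p hF.hasFDerivAt).fderiv
  rw [iteratedFDeriv_two_apply, hcomp]
  simp

end LineDeriv

/-! ### Auxiliary lemmas: the one-dimensional model computation -/

lemma hasDerivAt_poly_re (Q : Polynomial ℂ) (x : ℝ) :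
    HasDerivAt (fun y : ℝ => (Q.eval (-(y : ℂ))).re)
      (((-Q.derivative).eval (-(x : ℂ))).re) x := by
  have h1 : HasDerivAt (fun z : ℂ => Q.eval (-z))
      (Q.derivative.eval (-(x : ℂ)) * (-1)) (x : ℂ) :=
    HasDerivAt.comp _ (Q.hasDerivAt (-(x : ℂ))) ((hasDerivAt_id (x : ℂ)).neg)
  have h2 : HasDerivAt (fun y : ℝ => Q.eval (-(y : ℂ)))
      (Q.derivative.eval (-(x : ℂ)) * (-1)) x := h1.comp_ofReal
  have h3 := (Complex.reCLM.hasFDerivAt.comp_hasDerivAt x h2)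
  simpa [Polynomial.eval_neg, mul_neg_one, Function.comp_def] using h3

/-- `ρQ Q x = Re (Q(-x))`. -/
def ρQ (Q : Polynomial ℂ) (x : ℝ) : ℝ := (Q.eval (-(x : ℂ))).re

lemma hasDerivAt_ρQ (Q : Polynomial ℂ) (x : ℝ) :
    HasDerivAt (ρQ Q) (ρQ (-Q.derivative) x) x := hasDerivAt_poly_re Q x

/-- The auxiliary function `F(x) = Re det(1 - x A)` in its expanded polynomial form. -/
def auxF (c : ℝ) (Q : Polynomial ℂ) (x : ℝ) : ℝ := 1 - c * x + x ^ 2 * ρQ Q x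

def auxF₁ (c : ℝ) (Q : Polynomial ℂ) (x : ℝ) : ℝ :=
  -c + (2 * x * ρQ Q x + x ^ 2 * ρQ (-Q.derivative) x)

def auxF₂ (c : ℝ) (Q : Polynomial ℂ) (x : ℝ) : ℝ :=
  (2 * ρQ Q x + 2 * x * ρQ (-Q.derivative) x) +
    (2 * x * ρQ (-Q.derivative) x + x ^ 2 * ρQ (-(-Q.derivative).derivative) x)

lemma hasDerivAt_auxF (c : ℝ) (Q : Polynomial ℂ) (x : ℝ) :
    HasDerivAt (auxF c Q) (auxF₁ c Q x) x := by
  have h1 : HasDerivAt (fun x : ℝ => 1 - c * x) (-c) x := by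
    simpa using ((hasDerivAt_id x).const_mul c).const_sub 1
  have h2 : HasDerivAt (fun x : ℝ => x ^ 2 * ρQ Q x)
      (2 * x * ρQ Q x + x ^ 2 * ρQ (-Q.derivative) x) x := by
    have := (hasDerivAt_pow 2 x).mul (hasDerivAt_ρQ Q x)
    exact this.congr_deriv (by push_cast; ring)
  exact h1.add h2

lemma hasDerivAt_auxF₁ (c : ℝ) (Q : Polynomial ℂ) (x : ℝ) :
    HasDerivAt (auxF₁ c Q) (auxF₂ c Q x) x := by
  have h2 : HasDerivAt (fun x : ℝ => 2 * x * ρQ Q x)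
      (2 * ρQ Q x + 2 * x * ρQ (-Q.derivative) x) x := by
    have := (((hasDerivAt_id x).const_mul 2).mul (hasDerivAt_ρQ Q x))
    exact this.congr_deriv (by simp only [id_eq]; ring)
  have h3 : HasDerivAt (fun x : ℝ => x ^ 2 * ρQ (-Q.derivative) x)
      (2 * x * ρQ (-Q.derivative) x + x ^ 2 * ρQ (-(-Q.derivative).derivative) x) x := by
    have := (hasDerivAt_pow 2 x).mul (hasDerivAt_ρQ (-Q.derivative) x)
    exact this.congr_deriv (by push_cast; ring)
  have := (hasDerivAt_const x (-c)).add (h2.add h3)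
  exact this.congr_deriv (zero_add _)

lemma auxF_zero (c : ℝ) (Q : Polynomial ℂ) : auxF c Q 0 = 1 := by
  simp [auxF]

lemma auxF₁_zero (c : ℝ) (Q : Polynomial ℂ) : auxF₁ c Q 0 = -c := by
  simp [auxF₁]

lemma continuous_auxF (c : ℝ) (Q : Polynomial ℂ) : Continuous (auxF c Q) := by
  have h : Differentiable ℝ (auxF c Q) := fun x => (hasDerivAt_auxF c Q x).differentiableAt
  exact h.continuous

lemma key1D (k a b c : ℝ) (hk : 0 < k) (Q : Polynomial ℂ)
    (φ : ℝ → ℝ) (hφ : φ = fun t => (1 + 2*a*t + b*t^2) / (auxF c Q (t^2)) ^ k - 1) :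
    deriv φ 0 = 2 * a ∧ deriv (deriv φ) 0 = 2*k*c + 2*b := by
  set F := auxF c Q with hFdef
  set F₁ := auxF₁ c Q with hF₁def
  have hF : ∀ x, HasDerivAt F (F₁ x) x := hasDerivAt_auxF c Q
  have hF₁ : ∀ x, HasDerivAt F₁ (auxF₂ c Q x) x := hasDerivAt_auxF₁ c Q
  have F0 : F 0 = 1 := auxF_zero c Q
  have F₁0 : F₁ 0 = -c := auxF₁_zero c Q
  set S := {t : ℝ | 0 < F (t ^ 2)} with hSdef
  have hSopen : IsOpen S := isOpen_lt continuous_const ((continuous_auxF c Q).comp (continuous_pow 2))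
  have h0S : (0 : ℝ) ∈ S := by
    simp only [hSdef, Set.mem_setOf_eq]
    norm_num [F0]
  have hSnhds : S ∈ 𝓝 (0 : ℝ) := hSopen.mem_nhds h0S
  set G : ℝ → ℝ := fun t => 1 + 2*a*t + b*t^2 with hGdef
  set G₁ : ℝ → ℝ := fun t => 2*a + 2*b*t with hG₁def
  have hG : ∀ t, HasDerivAt G (G₁ t) t := by
    intro t
    have h1 : HasDerivAt (fun t : ℝ => 2*a*t) (2*a) t := by
      simpa using (hasDerivAt_id t).const_mul (2*a)
    have h2 : HasDerivAt (fun t : ℝ => b*t^2) (2*b*t) t := by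
      have := (hasDerivAt_pow 2 t).const_mul b
      exact this.congr_deriv (by push_cast; ring)
    have := ((hasDerivAt_const t (1:ℝ)).add h1).add h2
    exact this.congr_deriv (by ring)
  have hG₁ : ∀ t, HasDerivAt G₁ (2*b) t := by
    intro t
    exact (((hasDerivAt_id t).const_mul (2*b)).const_add (2*a)).congr_deriv (by ring)
  have hFt : ∀ t : ℝ, HasDerivAt (fun τ : ℝ => F (τ^2)) (F₁ (t^2) * (2*t)) t := by
    intro t
    have := (hF (t^2)).comp t (hasDerivAt_pow 2 t)
    exact this.congr_deriv (by push_cast; ring)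
  set H : ℝ → ℝ := fun t => F (t^2) ^ (-k) with hHdef
  have hH : ∀ t ∈ S, HasDerivAt H ((-k) * F (t^2) ^ (-k-1) * (F₁ (t^2) * (2*t))) t := by
    intro t ht
    exact (Real.hasDerivAt_rpow_const (Or.inl (ne_of_gt ht))).comp t (hFt t)
  set χ : ℝ → ℝ := fun t => G t * H t - 1 with hχdef
  set χ₁ : ℝ → ℝ := fun t =>
    G₁ t * H t + (G t * ((-k) * F (t^2) ^ (-k-1)) * F₁ (t^2)) * (2*t) with hχ₁def
  have hχ : ∀ t ∈ S, HasDerivAt χ (χ₁ t) t := by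
    intro t ht
    have := ((hG t).mul (hH t ht)).sub_const 1
    exact this.congr_deriv (by simp only [hχ₁def]; ring)
  have hφχ : φ =ᶠ[𝓝 (0:ℝ)] χ := by
    filter_upwards [hSnhds] with t ht
    rw [hφ]
    simp only [hχdef, hHdef, hGdef]
    rw [Real.rpow_neg (le_of_lt ht), div_eq_mul_inv]
  have hH0 : H 0 = 1 := by
    simp only [hHdef]; norm_num [F0]
  constructor
  · rw [hφχ.deriv_eq, (hχ 0 h0S).deriv]
    simp only [hχ₁def, hG₁def, hGdef]
    norm_num [hH0]
  · have h12 : deriv φ =ᶠ[𝓝 (0:ℝ)] χ₁ := by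
      refine hφχ.deriv.trans ?_
      filter_upwards [hSnhds] with t ht
      exact (hχ t ht).deriv
    rw [h12.deriv_eq]
    have hne : F ((0:ℝ)^2) ≠ 0 := by norm_num [F0]
    have hpow : HasDerivAt (fun t : ℝ => F (t^2) ^ (-k-1))
        ((-k-1) * F ((0:ℝ)^2) ^ (-k-1-1) * (F₁ ((0:ℝ)^2) * (2*0))) 0 :=
      by have h := (Real.hasDerivAt_rpow_const (p := -k-1) (Or.inl hne)).comp 0 (hFt 0); exact h
    have hmid : HasDerivAt (fun t : ℝ => (-k) * F (t^2) ^ (-k-1))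
        ((-k) * ((-k-1) * F ((0:ℝ)^2) ^ (-k-1-1) * (F₁ ((0:ℝ)^2) * (2*0)))) 0 :=
      hpow.const_mul (-k)
    have hF₁t : HasDerivAt (fun t : ℝ => F₁ (t^2)) (auxF₂ c Q ((0:ℝ)^2) * (2*0)) 0 := by
      have := (hF₁ ((0:ℝ)^2)).comp 0 (hasDerivAt_pow 2 (0:ℝ))
      exact this.congr_deriv (by push_cast; ring)
    have hw := ((hG 0).mul hmid).mul hF₁t
    have hW := hw.mul ((hasDerivAt_id (0:ℝ)).const_mul 2)
    have hT1 := (hG₁ 0).mul (hH 0 h0S)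
    have htot := hT1.add hW
    have hfinal : HasDerivAt χ₁ _ 0 := htot
    rw [hfinal.deriv]
    simp only [hGdef, hG₁def, hH0, id_eq]
    norm_num [F0, F₁0, Real.one_rpow]
    ring

/-! ### Auxiliary lemmas: matrix algebra -/

section MatrixAlgebra
variable {r s : ℕ}

lemma quad_eq (Z : Matrix (Fin r) (Fin s) ℂ) (x : Fin r → ℂ) :
    star x ⬝ᵥ ((1 - Z * Zᴴ) *ᵥ x) =
      (((∑ i, Complex.normSq (x i)) - ∑ j, Complex.normSq ((Zᴴ *ᵥ x) j) : ℝ) : ℂ) := by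
  have key : ∀ (n : ℕ) (y : Fin n → ℂ), star y ⬝ᵥ y = ((∑ i, Complex.normSq (y i) : ℝ) : ℂ) := by
    intro n y
    simp only [dotProduct, Pi.star_apply, RCLike.star_def]
    push_cast
    exact Finset.sum_congr rfl fun i _ => by rw [mul_comm, Complex.mul_conj]
  have h2 : star x ⬝ᵥ ((Z * Zᴴ) *ᵥ x) = star (Zᴴ *ᵥ x) ⬝ᵥ (Zᴴ *ᵥ x) := by
    rw [← Matrix.mulVec_mulVec, Matrix.dotProduct_mulVec]
    congr 1
    rw [Matrix.star_mulVec, Matrix.conjTranspose_conjTranspose]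
  rw [Matrix.sub_mulVec, Matrix.one_mulVec, dotProduct_sub, h2, key _ x, key _ (Zᴴ *ᵥ x)]
  push_cast
  ring

lemma isHermitian_one_sub (Z : Matrix (Fin r) (Fin s) ℂ) : (1 - Z * Zᴴ).IsHermitian :=
  Matrix.isHermitian_one.sub (Matrix.isHermitian_mul_conjTranspose_self Z)

lemma normSq_mulVec_le (Z : Matrix (Fin r) (Fin s) ℂ) (x : Fin r → ℂ) :
    (∑ j, Complex.normSq ((Zᴴ *ᵥ x) j)) ≤
      (∑ q : Fin r × Fin s, Complex.normSq (Z q.1 q.2)) * ∑ i, Complex.normSq (x i) := by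
  have hj : ∀ j, Complex.normSq ((Zᴴ *ᵥ x) j) ≤
      (∑ i, Complex.normSq (Z i j)) * ∑ i, Complex.normSq (x i) := by
    intro j
    have habs : ‖(Zᴴ *ᵥ x) j‖ ≤ ∑ i, ‖Z i j‖ * ‖x i‖ := by
      rw [show (Zᴴ *ᵥ x) j = ∑ i, (starRingEnd ℂ) (Z i j) * x i by
        simp [Matrix.mulVec, dotProduct, Matrix.conjTranspose_apply]]
      rw [show (‖∑ i, (starRingEnd ℂ) (Z i j) * x i‖ : ℝ)
        = ‖∑ i, (starRingEnd ℂ) (Z i j) * x i‖ from rfl]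
      refine le_trans (norm_sum_le _ _) ?_
      refine Finset.sum_le_sum fun i _ => ?_
      simp [_root_.map_mul]
    have h1 : Complex.normSq ((Zᴴ *ᵥ x) j) ≤ (∑ i, ‖Z i j‖ * ‖x i‖) ^ 2 := by
      rw [← Complex.sq_norm]
      exact pow_le_pow_left₀ (norm_nonneg _) habs 2
    refine h1.trans ?_
    have := Finset.sum_mul_sq_le_sq_mul_sq Finset.univ (fun i => ‖Z i j‖)
      (fun i => ‖x i‖)
    simpa [Complex.sq_norm] using this
  calc (∑ j, Complex.normSq ((Zᴴ *ᵥ x) j))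
      ≤ ∑ j, (∑ i, Complex.normSq (Z i j)) * ∑ i, Complex.normSq (x i) :=
        Finset.sum_le_sum fun j _ => hj j
    _ = (∑ q : Fin r × Fin s, Complex.normSq (Z q.1 q.2)) * ∑ i, Complex.normSq (x i) := by
        rw [← Finset.sum_mul]
        congr 1
        rw [Fintype.sum_prod_type]
        exact Finset.sum_comm

lemma posDef_of_frobenius {Z : Matrix (Fin r) (Fin s) ℂ}
    (h : (∑ q : Fin r × Fin s, Complex.normSq (Z q.1 q.2)) < 1) :
    (1 - Z * Zᴴ).PosDef := by
  refine Matrix.posDef_iff_dotProduct_mulVec.mpr ⟨isHermitian_one_sub Z, fun ⦃x⦄ hx => ?_⟩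
  rw [quad_eq]
  rw [Complex.zero_lt_real]
  have hS1 : 0 < ∑ i, Complex.normSq (x i) := by
    obtain ⟨i, hi⟩ := Function.ne_iff.mp hx
    refine Finset.sum_pos' (fun i _ => Complex.normSq_nonneg _) ⟨i, Finset.mem_univ i, ?_⟩
    simpa [Complex.normSq_pos] using hi
  have := normSq_mulVec_le Z x
  have h2 : (∑ q : Fin r × Fin s, Complex.normSq (Z q.1 q.2)) * ∑ i, Complex.normSq (x i)
      < 1 * ∑ i, Complex.normSq (x i) :=
    mul_lt_mul_of_pos_right h hS1
  rw [one_mul] at h2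
  linarith

lemma trace_mul_conjTranspose (M : Matrix (Fin r) (Fin s) ℂ) :
    (M * Mᴴ).trace = ((∑ q : Fin r × Fin s, Complex.normSq (M q.1 q.2) : ℝ) : ℂ) := by
  simp only [Matrix.trace, Matrix.diag, Matrix.mul_apply, Matrix.conjTranspose_apply]
  rw [Fintype.sum_prod_type]
  push_cast
  exact Finset.sum_congr rfl fun i _ => Finset.sum_congr rfl fun j _ => Complex.mul_conj _

lemma smul_matrix_real_complex (x : ℝ) (A : Matrix (Fin r) (Fin r) ℂ) :
    x • A = ((x : ℂ)) • A := by
  ext i j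
  simp [Complex.real_smul]

lemma one_sub_smul_eq (M : Matrix (Fin r) (Fin s) ℂ) (t : ℝ) :
    1 - (t • M) * (t • M)ᴴ = 1 + (-(((t^2 : ℝ) : ℂ))) • (M * Mᴴ) := by
  have h1 : (t • M)ᴴ = t • Mᴴ := by
    rw [Matrix.conjTranspose_smul, star_trivial]
  rw [h1, Matrix.smul_mul, Matrix.mul_smul, smul_smul]
  rw [show (t * t) = t^2 by ring, smul_matrix_real_complex, sub_eq_add_neg, ← neg_smul]

lemma det_re_line (M : Matrix (Fin r) (Fin s) ℂ) (t : ℝ) :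
    ((1 - (t • M) * (t • M)ᴴ).det).re =
      auxF (∑ q : Fin r × Fin s, Complex.normSq (M q.1 q.2))
        ((1 + (Polynomial.X : Polynomial ℂ) • (M * Mᴴ).map ⇑Polynomial.C).det.divX.divX)
        (t ^ 2) := by
  rw [one_sub_smul_eq, Matrix.det_one_add_smul, trace_mul_conjTranspose]
  have hu : (-(((t^2:ℝ)) : ℂ))^2 = (((t^2)^2 : ℝ) : ℂ) := by push_cast; ring
  rw [hu]
  simp only [auxF, ρQ, Complex.add_re, Complex.one_re, Complex.mul_re,
    Complex.ofReal_re, Complex.ofReal_im, Complex.neg_re, Complex.neg_im, mul_zero, zero_mul]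
  ring

lemma sum_normSq_line (m : ℕ) (i₀ : Fin m) (w : Fin m → ℂ) (t : ℝ) :
    (∑ i, Complex.normSq ((if i = i₀ then (1:ℂ) else 0) + (t : ℂ) * w i))
      = 1 + 2*((w i₀).re)*t + (∑ i, Complex.normSq (w i))*t^2 := by
  have hterm : ∀ i, Complex.normSq ((if i = i₀ then (1:ℂ) else 0) + (t:ℂ) * w i)
      = (if i = i₀ then 1 + 2*((w i₀).re)*t else 0) + Complex.normSq (w i) * t^2 := by
    intro i
    by_cases h : i = i₀
    · subst h
      rw [if_pos rfl, if_pos rfl]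
      simp only [Complex.normSq_apply, Complex.add_re, Complex.add_im,
        Complex.mul_re, Complex.mul_im, Complex.one_re, Complex.one_im,
        Complex.ofReal_re, Complex.ofReal_im]
      ring
    · simp only [if_neg h, Complex.normSq_apply, Complex.add_re, Complex.add_im,
        Complex.mul_re, Complex.mul_im, Complex.zero_re, Complex.zero_im,
        Complex.ofReal_re, Complex.ofReal_im, zero_add]
      ring
  rw [Finset.sum_congr rfl fun i _ => hterm i, Finset.sum_add_distrib,
    Finset.sum_ite_eq' Finset.univ i₀, ← Finset.sum_mul]
  simp

lemma det_re_bounds (Z : Matrix (Fin r) (Fin s) ℂ)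
    (hq : ∀ x : Fin r → ℂ,
      (∑ j, Complex.normSq ((Zᴴ *ᵥ x) j)) ≤ ∑ i, Complex.normSq (x i)) :
    0 ≤ ((1 - Z * Zᴴ).det).re ∧ ((1 - Z * Zᴴ).det).re ≤ 1 := by
  have hH : (1 - Z * Zᴴ).IsHermitian := isHermitian_one_sub Z
  have hPSD : (1 - Z * Zᴴ).PosSemidef := by
    refine Matrix.posSemidef_iff_dotProduct_mulVec.mpr ⟨hH, fun x => ?_⟩
    rw [quad_eq, Complex.zero_le_real]
    linarith [hq x]
  have hnn : ∀ i, 0 ≤ hH.eigenvalues i := hPSD.eigenvalues_nonneg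
  have hle : ∀ i, hH.eigenvalues i ≤ 1 := by
    intro i
    have hev := hH.eigenvalues_eq i
    set x : Fin r → ℂ := (hH.eigenvectorBasis i).ofLp with hx
    rw [quad_eq] at hev
    have hnorm : ∑ j, Complex.normSq (x j) = 1 := by
      have hn : ‖hH.eigenvectorBasis i‖ = 1 := hH.eigenvectorBasis.orthonormal.1 i
      rw [EuclideanSpace.norm_eq] at hn
      have h2 : (∑ j, ‖hH.eigenvectorBasis i j‖ ^ 2) = 1 := by
        have := congrArg (fun y => y ^ 2) hn
        simpa [Real.sq_sqrt (Finset.sum_nonneg fun j _ => sq_nonneg _)] using this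
      rw [← h2]
      exact Finset.sum_congr rfl fun j _ => by
        rw [hx]
        simp [Complex.normSq_eq_norm_sq]
    have hS2 : 0 ≤ ∑ j, Complex.normSq ((Zᴴ *ᵥ x) j) :=
      Finset.sum_nonneg fun j _ => Complex.normSq_nonneg _
    rw [show RCLike.re ((((∑ j, Complex.normSq (x j)) -
        ∑ j, Complex.normSq ((Zᴴ *ᵥ x) j) : ℝ)) : ℂ) = ((∑ j, Complex.normSq (x j)) -
        ∑ j, Complex.normSq ((Zᴴ *ᵥ x) j) : ℝ) from by simp] at hev
    rw [hnorm] at hev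
    linarith [hev]
  have hdetre : (1 - Z * Zᴴ).det.re = ∏ i, hH.eigenvalues i := by
    rw [hH.det_eq_prod_eigenvalues]
    norm_cast
  rw [hdetre]
  exact ⟨Finset.prod_nonneg fun i _ => hnn i,
    Finset.prod_le_one (fun i _ => hnn i) (fun i _ => hle i)⟩

lemma Z_eq_zero_of (Z : Matrix (Fin r) (Fin s) ℂ)
    (hq : ∀ x : Fin r → ℂ,
      (∑ j, Complex.normSq ((Zᴴ *ᵥ x) j)) ≤ ∑ i, Complex.normSq (x i))
    (hdet : 1 ≤ ((1 - Z * Zᴴ).det).re) : Z = 0 := by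
  have hH : (1 - Z * Zᴴ).IsHermitian := isHermitian_one_sub Z
  have hPSD : (1 - Z * Zᴴ).PosSemidef := by
    refine Matrix.posSemidef_iff_dotProduct_mulVec.mpr ⟨hH, fun x => ?_⟩
    rw [quad_eq, Complex.zero_le_real]
    linarith [hq x]
  have hnn : ∀ i, 0 ≤ hH.eigenvalues i := hPSD.eigenvalues_nonneg
  have hle : ∀ i, hH.eigenvalues i ≤ 1 := by
    intro i
    have hev := hH.eigenvalues_eq i
    set x : Fin r → ℂ := (hH.eigenvectorBasis i).ofLp with hx
    rw [quad_eq] at hev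
    have hnorm : ∑ j, Complex.normSq (x j) = 1 := by
      have hn : ‖hH.eigenvectorBasis i‖ = 1 := hH.eigenvectorBasis.orthonormal.1 i
      rw [EuclideanSpace.norm_eq] at hn
      have h2 : (∑ j, ‖hH.eigenvectorBasis i j‖ ^ 2) = 1 := by
        have := congrArg (fun y => y ^ 2) hn
        simpa [Real.sq_sqrt (Finset.sum_nonneg fun j _ => sq_nonneg _)] using this
      rw [← h2]
      exact Finset.sum_congr rfl fun j _ => by
        rw [hx]
        simp [Complex.normSq_eq_norm_sq]
    have hS2 : 0 ≤ ∑ j, Complex.normSq ((Zᴴ *ᵥ x) j) :=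
      Finset.sum_nonneg fun j _ => Complex.normSq_nonneg _
    rw [show RCLike.re ((((∑ j, Complex.normSq (x j)) -
        ∑ j, Complex.normSq ((Zᴴ *ᵥ x) j) : ℝ)) : ℂ) = ((∑ j, Complex.normSq (x j)) -
        ∑ j, Complex.normSq ((Zᴴ *ᵥ x) j) : ℝ) from by simp] at hev
    rw [hnorm] at hev
    linarith [hev]
  have hdetre : (1 - Z * Zᴴ).det.re = ∏ i, hH.eigenvalues i := by
    rw [hH.det_eq_prod_eigenvalues]
    norm_cast
  have h1 : ∀ j, hH.eigenvalues j = 1 := by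
    intro j
    refine le_antisymm (hle j) ?_
    have hp : 1 ≤ ∏ i, hH.eigenvalues i := by rw [← hdetre]; exact hdet
    have h2 : (∏ i, hH.eigenvalues i) ≤ hH.eigenvalues j := by
      calc ∏ i, hH.eigenvalues i
          = hH.eigenvalues j * ∏ i ∈ Finset.univ.erase j, hH.eigenvalues i :=
            (Finset.mul_prod_erase _ _ (Finset.mem_univ j)).symm
        _ ≤ hH.eigenvalues j * 1 := by
            refine mul_le_mul_of_nonneg_left ?_ (hnn j)
            exact Finset.prod_le_one (fun i _ => hnn i) (fun i _ => hle i)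
        _ = hH.eigenvalues j := mul_one _
    linarith
  have hB1 : (1 : Matrix (Fin r) (Fin r) ℂ) - Z * Zᴴ = 1 := by
    rw [hH.spectral_theorem]
    have hdiag : Matrix.diagonal (RCLike.ofReal ∘ hH.eigenvalues) =
        (1 : Matrix (Fin r) (Fin r) ℂ) := by
      rw [show (RCLike.ofReal ∘ hH.eigenvalues : Fin r → ℂ) = fun _ => (1 : ℂ) from
        funext fun i => by simp [h1 i]]
      exact Matrix.diagonal_one
    rw [hdiag]
    exact map_one _
  exact Matrix.self_mul_conjTranspose_eq_zero.mp (sub_eq_self.mp hB1)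

end MatrixAlgebra

/-! ### Auxiliary lemmas: smoothness -/

section Smoothness
variable {ι : Type*} [Fintype ι]

lemma contDiff_coord (x : ι) : ContDiff ℝ 2 (fun P : EuclideanSpace ℂ ι => P x) :=
  ((EuclideanSpace.proj (𝕜 := ℂ) x).restrictScalars ℝ).contDiff

lemma contDiff_conj_coord (x : ι) :
    ContDiff ℝ 2 (fun P : EuclideanSpace ℂ ι => (starRingEnd ℂ) (P x)) := by
  have := (Complex.conjCLE.contDiff (n := 2)).comp (contDiff_coord x)
  simpa [Function.comp_def] using this

lemma contDiff_normSq_coord (x : ι) :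
    ContDiff ℝ 2 (fun P : EuclideanSpace ℂ ι => Complex.normSq (P x)) := by
  have heq : (fun P : EuclideanSpace ℂ ι => Complex.normSq (P x)) =
      fun P => (P x).re ^ 2 + (P x).im ^ 2 := by
    funext P
    rw [Complex.normSq_apply]; ring
  rw [heq]
  exact ((Complex.reCLM.contDiff.comp (contDiff_coord x)).pow 2).add
    ((Complex.imCLM.contDiff.comp (contDiff_coord x)).pow 2)

end Smoothness

section Smoothness2
variable {r s m : ℕ}

lemma contDiff_gsum :
    ContDiff ℝ 2 (fun P : EuclideanSpace ℂ ((Fin r × Fin s) ⊕ Fin m) =>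
      ∑ i : Fin m, ‖P (Sum.inr i)‖ ^ 2) := by
  have heq : (fun P : EuclideanSpace ℂ ((Fin r × Fin s) ⊕ Fin m) =>
      ∑ i : Fin m, ‖P (Sum.inr i)‖ ^ 2) =
      fun P => ∑ i : Fin m, Complex.normSq (P (Sum.inr i)) := by
    funext P
    exact Finset.sum_congr rfl fun i _ => Complex.sq_norm _
  rw [heq]
  exact ContDiff.sum fun i _ => contDiff_normSq_coord (Sum.inr i)

lemma contDiff_detfun :
    ContDiff ℝ 2 (fun P : EuclideanSpace ℂ ((Fin r × Fin s) ⊕ Fin m) =>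
      (1 - matPart P * (matPart P)ᴴ).det) := by
  have heq : (fun P : EuclideanSpace ℂ ((Fin r × Fin s) ⊕ Fin m) =>
      (1 - matPart P * (matPart P)ᴴ).det) =
      fun P => ∑ σ : Equiv.Perm (Fin r), (((Equiv.Perm.sign σ : ℤ) : ℂ)) *
        ∏ i, (((1 : Matrix (Fin r) (Fin r) ℂ) (σ i) i) -
          ∑ j, P (Sum.inl (σ i, j)) * (starRingEnd ℂ) (P (Sum.inl (i, j)))) := by
    funext P
    rw [Matrix.det_apply]
    refine Finset.sum_congr rfl fun σ _ => ?_
    rw [Units.smul_def, zsmul_eq_mul]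
    congr 1
  rw [heq]
  refine ContDiff.sum fun σ _ => contDiff_const.mul ?_
  refine contDiff_prod fun i _ => ContDiff.sub contDiff_const ?_
  exact ContDiff.sum fun j _ =>
    (contDiff_coord (Sum.inl (σ i, j))).mul (contDiff_conj_coord (Sum.inl (i, j)))

lemma contDiff_dfun :
    ContDiff ℝ 2 (fun P : EuclideanSpace ℂ ((Fin r × Fin s) ⊕ Fin m) =>
      ((1 - matPart P * (matPart P)ᴴ).det).re) :=
  Complex.reCLM.contDiff.comp contDiff_detfun

lemma contDiffAt_defining (k : ℝ) (P₀ : EuclideanSpace ℂ ((Fin r × Fin s) ⊕ Fin m))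
    (hpos : 0 < ((1 - matPart P₀ * (matPart P₀)ᴴ).det).re) :
    ContDiffAt ℝ 2 (cartanHartogsDefining r s m k) P₀ := by
  have h1 : ContDiffAt ℝ 2 (fun P : EuclideanSpace ℂ ((Fin r × Fin s) ⊕ Fin m) =>
      ((1 - matPart P * (matPart P)ᴴ).det).re ^ k) P₀ :=
    by have h := (Real.contDiffAt_rpow_const_of_ne (p := k) (n := 2) (ne_of_gt hpos)).comp P₀ contDiff_dfun.contDiffAt; exact h
  have h2 := (contDiff_gsum.contDiffAt
      (x := P₀)).div h1 (ne_of_gt (Real.rpow_pos_of_pos hpos k))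
  exact h2.sub contDiffAt_const
end Smoothness2

set_option maxHeartbeats 1000000 in
/-- Let `Ω̂_k` be the Cartan–Hartogs domain over `D_I(r,s)` (`r ≤ s`), `m ≥ 1`, `k > 0`.
Then the boundary point `p₀ = (0, …, 0, 1)` (with `Z = 0`, `W = (0, …, 0, 1)`) is a
globally strongly convex boundary point of `Ω̂_k`; in particular, the real Hessian at `p₀`
of `X(Z,W) = ‖W‖²/N(Z,Z)^k − 1` is the block diagonal matrix `diag(2k·I_{2rs}, 2·I_{2m})`
(as a quadratic form, `v ↦ 2k‖v_Z‖² + 2‖v_W‖²`), the gradient of `X` at `p₀` is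
`2·∂/∂u_m ≠ 0` where `u_m = Re w_m`, and the closure of `Ω̂_k` meets `{Re w_m = 1}` only
in `p₀`. -/
theorem cartanHartogs_gsc_boundary_point (r s : ℕ) (hr : 0 < r) (hrs : r ≤ s)
    (m : ℕ) (k : ℝ) (hk : 0 < k)
    (i₀ : Fin m) (hi₀ : (i₀ : ℕ) = m - 1)
    (p₀ : EuclideanSpace ℂ ((Fin r × Fin s) ⊕ Fin m))
    (hp₀ : p₀ = WithLp.toLp 2 (Sum.elim (fun _ => (0 : ℂ)) (fun i => if i = i₀ then 1 else 0))) :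
    IsGSCBoundaryPoint (CartanHartogsI r s m k) p₀ ∧
    (∀ v : EuclideanSpace ℂ ((Fin r × Fin s) ⊕ Fin m),
      iteratedFDeriv ℝ 2 (cartanHartogsDefining r s m k) p₀ ![v, v] =
        2 * k * (∑ q : Fin r × Fin s, Complex.normSq (v (Sum.inl q))) +
        2 * (∑ i : Fin m, Complex.normSq (v (Sum.inr i)))) ∧
    (∀ v : EuclideanSpace ℂ ((Fin r × Fin s) ⊕ Fin m),
      fderiv ℝ (cartanHartogsDefining r s m k) p₀ v = 2 * (v (Sum.inr i₀)).re) ∧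
    fderiv ℝ (cartanHartogsDefining r s m k) p₀ ≠ 0 ∧
    closure (CartanHartogsI r s m k) ∩ { P | (P (Sum.inr i₀)).re = 1 } = {p₀} := by
  have hp0l : ∀ q : Fin r × Fin s, p₀ (Sum.inl q) = 0 := fun q => by rw [hp₀]; rfl
  have hp0r : ∀ i : Fin m, p₀ (Sum.inr i) = if i = i₀ then 1 else 0 := fun i => by rw [hp₀]; rfl
  have hmatp0 : matPart p₀ = 0 := by
    ext i j
    simp [matPart, hp0l]
  have hdp0 : ((1 - matPart p₀ * (matPart p₀)ᴴ).det).re = 1 := by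
    rw [hmatp0]
    simp
  -- the restriction of the defining function to a line through p₀
  have hline : ∀ (v : EuclideanSpace ℂ ((Fin r × Fin s) ⊕ Fin m)),
      (fun t : ℝ => cartanHartogsDefining r s m k (p₀ + t • v)) =
      fun t : ℝ => (1 + 2*((v (Sum.inr i₀)).re)*t +
          (∑ i : Fin m, Complex.normSq (v (Sum.inr i)))*t^2) /
        (auxF (∑ q : Fin r × Fin s, Complex.normSq (v (Sum.inl q)))
          ((1 + (Polynomial.X : Polynomial ℂ) •
            ((matPart v) * (matPart v)ᴴ).map ⇑Polynomial.C).det.divX.divX)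
          (t^2)) ^ k - 1 := by
    intro v
    funext t
    unfold cartanHartogsDefining
    have hnum : (∑ i : Fin m, ‖(p₀ + t • v) (Sum.inr i)‖ ^ 2) =
        1 + 2*((v (Sum.inr i₀)).re)*t +
          (∑ i : Fin m, Complex.normSq (v (Sum.inr i)))*t^2 := by
      have hco : ∀ i : Fin m, (p₀ + t • v) (Sum.inr i) =
          (if i = i₀ then (1:ℂ) else 0) + (t:ℂ) * v (Sum.inr i) := by
        intro i
        rw [PiLp.add_apply, PiLp.smul_apply, hp0r i, Complex.real_smul]
      rw [Finset.sum_congr rfl fun i _ => by rw [hco i, Complex.sq_norm]]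
      exact sum_normSq_line m i₀ (fun i => v (Sum.inr i)) t
    have hmat : matPart (p₀ + t • v) = t • matPart v := by
      ext i j
      simp [matPart, PiLp.add_apply, PiLp.smul_apply, hp0l]
    rw [hnum, hmat, det_re_line]
    have hc : (∑ q : Fin r × Fin s, Complex.normSq (matPart v q.1 q.2)) =
        ∑ q : Fin r × Fin s, Complex.normSq (v (Sum.inl q)) := by
      exact Finset.sum_congr rfl fun q _ => by simp [matPart]
    rw [hc]
  have hXct : ContDiffAt ℝ 2 (cartanHartogsDefining r s m k) p₀ :=
    contDiffAt_defining k p₀ (by rw [hdp0]; norm_num)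
  -- Claim B : the gradient
  have claimB : ∀ v : EuclideanSpace ℂ ((Fin r × Fin s) ⊕ Fin m),
      fderiv ℝ (cartanHartogsDefining r s m k) p₀ v = 2 * (v (Sum.inr i₀)).re := by
    intro v
    rw [fderiv_eq_lineDeriv _ p₀ v (hXct.differentiableAt two_ne_zero)]
    exact (key1D k ((v (Sum.inr i₀)).re) (∑ i : Fin m, Complex.normSq (v (Sum.inr i)))
      (∑ q : Fin r × Fin s, Complex.normSq (v (Sum.inl q))) hk _ _ (hline v)).1
  -- Claim A : the Hessian
  have claimA : ∀ v : EuclideanSpace ℂ ((Fin r × Fin s) ⊕ Fin m),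
      iteratedFDeriv ℝ 2 (cartanHartogsDefining r s m k) p₀ ![v, v] =
        2 * k * (∑ q : Fin r × Fin s, Complex.normSq (v (Sum.inl q))) +
        2 * (∑ i : Fin m, Complex.normSq (v (Sum.inr i))) := by
    intro v
    rw [iteratedFDeriv_two_eq_line _ _ hXct v]
    exact (key1D k ((v (Sum.inr i₀)).re) (∑ i : Fin m, Complex.normSq (v (Sum.inr i)))
      (∑ q : Fin r × Fin s, Complex.normSq (v (Sum.inl q))) hk _ _ (hline v)).2
  -- Claim C : the gradient is nonzero
  have claimC : fderiv ℝ (cartanHartogsDefining r s m k) p₀ ≠ 0 := by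
    intro h
    have h2 := claimB (EuclideanSpace.single (Sum.inr i₀) (1:ℂ))
    rw [h] at h2
    rw [show (EuclideanSpace.single (Sum.inr i₀) (1:ℂ)) (Sum.inr i₀) = 1 from
      by simp [EuclideanSpace.single_apply]] at h2
    simp at h2
  -- p₀ is not in the domain
  have hp0g : (∑ i : Fin m, ‖p₀ (Sum.inr i)‖ ^ 2) = 1 := by
    calc (∑ i : Fin m, ‖p₀ (Sum.inr i)‖ ^ 2)
        = ∑ i : Fin m, (if i = i₀ then (1:ℝ) else 0) := by
          refine Finset.sum_congr rfl fun i _ => ?_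
          rw [hp0r i]
          by_cases h : i = i₀ <;> simp [h]
      _ = 1 := by simp
  have hp0notD : p₀ ∉ CartanHartogsI r s m k := by
    rintro ⟨-, hlt⟩
    rw [hp0g, hdp0, Real.one_rpow] at hlt
    exact lt_irrefl 1 hlt
  -- p₀ is in the closure
  have hp0cl : p₀ ∈ closure (CartanHartogsI r s m k) := by
    have htend : Tendsto (fun n : ℕ => (1 - 1/((n:ℝ)+1)) • p₀) atTop (𝓝 p₀) := by
      have h1 : Tendsto (fun n : ℕ => (1 - 1/((n:ℝ)+1))) atTop (𝓝 1) := by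
        simpa using (tendsto_const_nhds (x := (1:ℝ))).sub tendsto_one_div_add_atTop_nhds_zero_nat
      simpa using h1.smul_const p₀
    refine mem_closure_of_tendsto htend (Filter.Eventually.of_forall fun n => ?_)
    set t : ℝ := 1 - 1/((n:ℝ)+1) with ht
    have ht0 : 0 ≤ t := by
      rw [ht]
      have : 1/((n:ℝ)+1) ≤ 1 := by
        rw [div_le_one (by positivity)]
        simp
      linarith
    have ht1 : t < 1 := by
      rw [ht]
      have : 0 < 1/((n:ℝ)+1) := by positivity
      linarith
    have hm : matPart (t • p₀) = 0 := by
      ext i j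
      simp [matPart, PiLp.smul_apply, hp0l]
    have hmg : (∑ i : Fin m, ‖(t • p₀) (Sum.inr i)‖ ^ 2) = t^2 := by
      calc (∑ i : Fin m, ‖(t • p₀) (Sum.inr i)‖ ^ 2)
          = ∑ i : Fin m, (if i = i₀ then t^2 else 0) := by
            refine Finset.sum_congr rfl fun i _ => ?_
            rw [PiLp.smul_apply, hp0r i]
            by_cases h : i = i₀ <;>
              simp [h, Complex.real_smul, _root_.map_mul, Complex.norm_real, mul_pow, sq_abs]
        _ = t^2 := by simp
    constructor
    · rw [hm]
      simpa using (Matrix.PosDef.one :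
        Matrix.PosDef (1 : Matrix (Fin r) (Fin r) ℂ))
    · rw [hm, hmg]
      simpa using pow_lt_one₀ ht0 ht1 (two_ne_zero)
  -- Claim D : closure ∩ hyperplane = {p₀}
  have claimD : closure (CartanHartogsI r s m k) ∩
      { P : EuclideanSpace ℂ ((Fin r × Fin s) ⊕ Fin m) | (P (Sum.inr i₀)).re = 1 } = {p₀} := by
    set Cset : Set (EuclideanSpace ℂ ((Fin r × Fin s) ⊕ Fin m)) :=
      {P | (∀ x : Fin r → ℂ, (∑ j, Complex.normSq (((matPart P)ᴴ *ᵥ x) j)) ≤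
              ∑ i, Complex.normSq (x i)) ∧
           (∑ i : Fin m, ‖P (Sum.inr i)‖ ^ 2) ≤
              ((1 - matPart P * (matPart P)ᴴ).det).re ^ k} with hCdef
    have hDC : CartanHartogsI r s m k ⊆ Cset := by
      rintro P ⟨hpd, hlt⟩
      refine ⟨fun x => ?_, le_of_lt hlt⟩
      by_cases hx : x = 0
      · subst hx; simp
      · have h := (Matrix.posDef_iff_dotProduct_mulVec.mp hpd).2 hx
        rw [quad_eq, Complex.zero_lt_real] at h
        linarith
    have hS2cont : ∀ x : Fin r → ℂ,
        Continuous (fun P : EuclideanSpace ℂ ((Fin r × Fin s) ⊕ Fin m) =>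
          ∑ j, Complex.normSq (((matPart P)ᴴ *ᵥ x) j)) := by
      intro x
      have heq : (fun P : EuclideanSpace ℂ ((Fin r × Fin s) ⊕ Fin m) =>
          ∑ j, Complex.normSq (((matPart P)ᴴ *ᵥ x) j)) =
          fun P => ∑ j, Complex.normSq (∑ i, (starRingEnd ℂ) (P (Sum.inl (i, j))) * x i) := by
        funext P
        refine Finset.sum_congr rfl fun j _ => ?_
        congr 1
      rw [heq]
      refine continuous_finset_sum _ fun j _ => Complex.continuous_normSq.comp ?_
      refine continuous_finset_sum _ fun i _ => Continuous.mul ?_ continuous_const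
      exact (contDiff_conj_coord (Sum.inl (i, j))).continuous
    have hCclosed : IsClosed Cset := by
      have h1 : IsClosed {P : EuclideanSpace ℂ ((Fin r × Fin s) ⊕ Fin m) |
          ∀ x : Fin r → ℂ, (∑ j, Complex.normSq (((matPart P)ᴴ *ᵥ x) j)) ≤
            ∑ i, Complex.normSq (x i)} := by
        have heq2 : {P : EuclideanSpace ℂ ((Fin r × Fin s) ⊕ Fin m) |
            ∀ x : Fin r → ℂ, (∑ j, Complex.normSq (((matPart P)ᴴ *ᵥ x) j)) ≤
              ∑ i, Complex.normSq (x i)} =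
            ⋂ x : Fin r → ℂ, {P | (∑ j, Complex.normSq (((matPart P)ᴴ *ᵥ x) j)) ≤
              ∑ i, Complex.normSq (x i)} := by
          ext P
          simp [Set.mem_iInter]
        rw [heq2]
        exact isClosed_iInter fun x => isClosed_le (hS2cont x) continuous_const
      have h2 : IsClosed {P : EuclideanSpace ℂ ((Fin r × Fin s) ⊕ Fin m) |
          (∑ i : Fin m, ‖P (Sum.inr i)‖ ^ 2) ≤
            ((1 - matPart P * (matPart P)ᴴ).det).re ^ k} :=
        isClosed_le contDiff_gsum.continuous
          ((Real.continuous_rpow_const hk.le).comp contDiff_dfun.continuous)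
      rw [hCdef, Set.setOf_and]
      exact h1.inter h2
    have hclC : closure (CartanHartogsI r s m k) ⊆ Cset := closure_minimal hDC hCclosed
    apply Set.eq_singleton_iff_unique_mem.mpr
    constructor
    · refine ⟨hp0cl, ?_⟩
      rw [Set.mem_setOf_eq, hp0r i₀, if_pos rfl]
      simp
    · rintro P ⟨hPcl, hPre⟩
      rw [Set.mem_setOf_eq] at hPre
      obtain ⟨h1, h2⟩ := hclC hPcl
      obtain ⟨hd0, hd1⟩ := det_re_bounds (matPart P) h1
      have hgle1 : (∑ i : Fin m, ‖P (Sum.inr i)‖ ^ 2) ≤ 1 :=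
        h2.trans (Real.rpow_le_one hd0 hd1 hk.le)
      have hterm : (1:ℝ) ≤ ‖P (Sum.inr i₀)‖ ^ 2 := by
        rw [Complex.sq_norm, Complex.normSq_apply, hPre]
        nlinarith [sq_nonneg (P (Sum.inr i₀)).im]
      have hsum_ge : (1:ℝ) ≤ ∑ i : Fin m, ‖P (Sum.inr i)‖ ^ 2 :=
        le_trans hterm (Finset.single_le_sum (f := fun i => ‖P (Sum.inr i)‖ ^ 2)
          (fun i _ => sq_nonneg _) (Finset.mem_univ i₀))
      have hdet1 : 1 ≤ ((1 - matPart P * (matPart P)ᴴ).det).re := by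
        by_contra hlt
        push_neg at hlt
        have := Real.rpow_lt_one hd0 hlt hk
        linarith [hsum_ge.trans h2]
      have hZ : matPart P = 0 := Z_eq_zero_of (matPart P) h1 hdet1
      have herase0 : ∑ i ∈ Finset.univ.erase i₀, ‖P (Sum.inr i)‖ ^ 2 = 0 := by
        have hsplit : ‖P (Sum.inr i₀)‖ ^ 2 +
            ∑ i ∈ Finset.univ.erase i₀, ‖P (Sum.inr i)‖ ^ 2 =
            ∑ i : Fin m, ‖P (Sum.inr i)‖ ^ 2 :=
          Finset.add_sum_erase Finset.univ
            (fun i => ‖P (Sum.inr i)‖ ^ 2) (Finset.mem_univ i₀)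
        have herase_nonneg : 0 ≤ ∑ i ∈ Finset.univ.erase i₀,
            ‖P (Sum.inr i)‖ ^ 2 :=
          Finset.sum_nonneg fun _ _ => sq_nonneg _
        linarith
      have hothers : ∀ i : Fin m, i ≠ i₀ → P (Sum.inr i) = 0 := by
        intro i hi
        have hmem : i ∈ Finset.univ.erase i₀ := Finset.mem_erase.mpr ⟨hi, Finset.mem_univ i⟩
        have h0 := (Finset.sum_eq_zero_iff_of_nonneg
          (fun _ _ => sq_nonneg (‖P (Sum.inr _)‖))).mp herase0 i hmem
        exact norm_eq_zero.mp ((pow_eq_zero_iff two_ne_zero).mp h0)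
      have hi0coord : P (Sum.inr i₀) = 1 := by
        have hle2 : ‖P (Sum.inr i₀)‖ ^ 2 ≤ 1 :=
          le_trans (Finset.single_le_sum (f := fun i => ‖P (Sum.inr i)‖ ^ 2)
            (fun i _ => sq_nonneg _) (Finset.mem_univ i₀)) hgle1
        rw [Complex.sq_norm, Complex.normSq_apply] at hle2
        have him : (P (Sum.inr i₀)).im = 0 := by nlinarith [hPre]
        apply Complex.ext
        · rw [hPre]; simp
        · rw [him]; simp
      rw [hp₀]
      ext x
      cases x with
      | inl q =>
        have := Matrix.ext_iff.mpr hZ q.1 q.2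
        simpa [matPart] using this
      | inr i =>
        by_cases h : i = i₀
        · subst h
          simpa using hi0coord
        · simp only [Sum.elim_inr, if_neg h]
          exact hothers i h
  refine ⟨⟨?_, ?_⟩, claimA, claimB, claimC, claimD⟩
  · exact ⟨hp0cl, fun h => hp0notD (interior_subset h)⟩
  · -- existence of U and ρ
    refine ⟨{P | (∑ q : Fin r × Fin s, Complex.normSq (P (Sum.inl q))) < 1},
      cartanHartogsDefining r s m k, ?_, ?_, ?_, ?_, claimC, ?_, ?_⟩
    · exact isOpen_lt (ContDiff.sum fun q _ => contDiff_normSq_coord (Sum.inl q)).continuous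
        continuous_const
    · simp only [Set.mem_setOf_eq]
      have : (∑ q : Fin r × Fin s, Complex.normSq (p₀ (Sum.inl q))) = 0 := by
        refine Finset.sum_eq_zero fun q _ => ?_
        rw [hp0l q]
        simp
      rw [this]; norm_num
    · -- ContDiffOn
      intro P hP
      have hfrob : (∑ q : Fin r × Fin s, Complex.normSq (matPart P q.1 q.2)) < 1 := by
        have hc : (∑ q : Fin r × Fin s, Complex.normSq (matPart P q.1 q.2)) =
            ∑ q : Fin r × Fin s, Complex.normSq (P (Sum.inl q)) :=
          Finset.sum_congr rfl fun q _ => by simp [matPart]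
        rw [hc]; exact hP
      have hpd := posDef_of_frobenius hfrob
      have hdetpos : 0 < ((1 - matPart P * (matPart P)ᴴ).det).re :=
        (Complex.lt_def.mp hpd.det_pos).1
      exact (contDiffAt_defining k P hdetpos).contDiffWithinAt
    · -- membership iff
      intro P hP
      have hfrob : (∑ q : Fin r × Fin s, Complex.normSq (matPart P q.1 q.2)) < 1 := by
        have hc : (∑ q : Fin r × Fin s, Complex.normSq (matPart P q.1 q.2)) =
            ∑ q : Fin r × Fin s, Complex.normSq (P (Sum.inl q)) :=
          Finset.sum_congr rfl fun q _ => by simp [matPart]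
        rw [hc]; exact hP
      have hpd := posDef_of_frobenius hfrob
      have hdetpos : 0 < ((1 - matPart P * (matPart P)ᴴ).det).re :=
        (Complex.lt_def.mp hpd.det_pos).1
      have hrpow : 0 < ((1 - matPart P * (matPart P)ᴴ).det).re ^ k :=
        Real.rpow_pos_of_pos hdetpos k
      constructor
      · rintro ⟨-, hlt⟩
        unfold cartanHartogsDefining
        rw [sub_neg, div_lt_one hrpow]
        exact hlt
      · intro hneg
        unfold cartanHartogsDefining at hneg
        rw [sub_neg, div_lt_one hrpow] at hneg
        exact ⟨hpd, hneg⟩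
    · -- positivity of the Hessian
      intro v hv _
      rw [claimA v]
      have hb : 0 ≤ ∑ i : Fin m, Complex.normSq (v (Sum.inr i)) :=
        Finset.sum_nonneg fun i _ => Complex.normSq_nonneg _
      have hc : 0 ≤ ∑ q : Fin r × Fin s, Complex.normSq (v (Sum.inl q)) :=
        Finset.sum_nonneg fun q _ => Complex.normSq_nonneg _
      obtain ⟨x, hx⟩ := Function.ne_iff.mp (show v.ofLp ≠ (0 : EuclideanSpace ℂ _).ofLp from fun h => hv (WithLp.ofLp_injective 2 h))
      have hx' : v x ≠ 0 := hx
      cases x with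
      | inl q =>
        have hcpos : 0 < ∑ q : Fin r × Fin s, Complex.normSq (v (Sum.inl q)) :=
          Finset.sum_pos' (fun q _ => Complex.normSq_nonneg _)
            ⟨q, Finset.mem_univ q, by simpa [Complex.normSq_pos] using hx'⟩
        nlinarith
      | inr i =>
        have hbpos : 0 < ∑ i : Fin m, Complex.normSq (v (Sum.inr i)) :=
          Finset.sum_pos' (fun i _ => Complex.normSq_nonneg _)
            ⟨i, Finset.mem_univ i, by simpa [Complex.normSq_pos] using hx'⟩
        nlinarith
    · -- tangent hyperplane
      have hset : {z : EuclideanSpace ℂ ((Fin r × Fin s) ⊕ Fin m) |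
          fderiv ℝ (cartanHartogsDefining r s m k) p₀ (z - p₀) = 0} =
          { P : EuclideanSpace ℂ ((Fin r × Fin s) ⊕ Fin m) | (P (Sum.inr i₀)).re = 1 } := by
        ext z
        simp only [Set.mem_setOf_eq]
        rw [claimB (z - p₀)]
        have : (z - p₀) (Sum.inr i₀) = z (Sum.inr i₀) - 1 := by
          rw [PiLp.sub_apply, hp0r i₀, if_pos rfl]
        rw [this, Complex.sub_re, Complex.one_re]
        constructor
        · intro h; linarith
        · intro h; rw [h]; ring
      rw [hset]
      exact claimD
end
end
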